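/- Let α, β ∈ ℝ. For ξ ∈ ℤ₊ⁿ define C̃_ξ := Σ_{i=1}^n e^{W(ξ) + α ξᵢ} + Σ_{i : ξᵢ > 0} e^{W(ξ) − β (Aξ)ᵢ} (the total conductance at ξ in the modified model). Then the sum Σ_{ξ ∈ ℤ₊ⁿ} C̃_ξ is finite if and only if α < 0 and α + β λ₁(G) < 0. -/

import Mathlib

open Finset Real

/-- `W(ξ) = (α/2) Σᵢ ξᵢ(ξᵢ−1) + β Σ_{edges i∼j} ξᵢξⱼ`, with the edge sum written as half
the double sum over the entries of the adjacency matrix (each edge is counted twice). -/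
noncomputable def W {n : ℕ} (G : SimpleGraph (Fin n)) [DecidableRel G.Adj]
    (α β : ℝ) (ξ : Fin n → ℕ) : ℝ :=
  α / 2 * ∑ i, (ξ i : ℝ) * ((ξ i : ℝ) - 1)
    + β / 2 * ∑ i, ∑ j, G.adjMatrix ℝ i j * (ξ i : ℝ) * (ξ j : ℝ)

/-- Total conductance at `ξ` in the modified model:
`C̃_ξ = Σᵢ e^{W(ξ)+αξᵢ} + Σ_{i : ξᵢ>0} e^{W(ξ)−β(Aξ)ᵢ}`. -/
noncomputable def Ctilde {n : ℕ} (G : SimpleGraph (Fin n)) [DecidableRel G.Adj]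
    (α β : ℝ) (ξ : Fin n → ℕ) : ℝ :=
  (∑ i, Real.exp (W G α β ξ + α * (ξ i : ℝ)))
    + ∑ i ∈ Finset.univ.filter (fun i => 0 < ξ i),
        Real.exp (W G α β ξ - β * (G.adjMatrix ℝ).mulVec (fun j => (ξ j : ℝ)) i)


section Stmt4Aux
open Matrix


lemma summable_exp_quad {c C : ℝ} (hc : c < 0) :
    Summable (fun k : ℕ => Real.exp (c/2 * (k:ℝ)^2 + C*k)) := by
  obtain ⟨K, hK⟩ := exists_nat_gt ((2*(C+1))/(-c))
  have hKb : ∀ k : ℕ, K ≤ k → c/2 * (k:ℝ)^2 + C*k ≤ -(k:ℝ) := by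
    intro k hk
    have hkK : ((2*(C+1))/(-c)) < (k:ℝ) :=
      lt_of_lt_of_le hK (by exact_mod_cast hk)
    have h1 : 2*(C+1) < (k:ℝ)*(-c) := (div_lt_iff₀ (by linarith)).mp hkK
    have hkr : (0:ℝ) ≤ (k:ℝ) := Nat.cast_nonneg k
    have h2 : c/2 * (k:ℝ) + (C+1) ≤ 0 := by nlinarith
    nlinarith
  rw [← summable_nat_add_iff K]
  refine Summable.of_nonneg_of_le (fun k => (Real.exp_pos _).le) ?_
    (summable_geometric_of_lt_one (r := Real.exp (-1)) (Real.exp_pos _).le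
      (Real.exp_lt_one_iff.mpr (by norm_num)))
  · intro k
    have : Real.exp (-1) ^ k = Real.exp (-(k:ℝ)) := by
      rw [← Real.exp_nat_mul]; ring_nf
    rw [this]
    apply Real.exp_le_exp.mpr
    have := hKb (k + K) (Nat.le_add_left _ _)
    push_cast at this ⊢
    linarith [Nat.cast_nonneg (α := ℝ) K]

set_option maxHeartbeats 1000000 in
lemma summable_pi_prod (n : ℕ) (f : ℕ → ℝ) (hf : Summable f) (h0 : ∀ k, 0 ≤ f k) :
    Summable (fun ξ : Fin n → ℕ => ∏ i, f (ξ i)) := by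
  induction n with
  | zero =>
      have : (fun ξ : Fin 0 → ℕ => ∏ i, f (ξ i)) = fun _ => 1 := by
        funext ξ; simp
      rw [this]
      exact .of_finite
  | succ n ih =>
      have h2 : Summable (fun p : ℕ × (Fin n → ℕ) => f p.1 * ∏ i, f (p.2 i)) := by
        apply Summable.mul_of_nonneg hf ih
        · exact h0
        · exact fun ξ => Finset.prod_nonneg fun i _ => h0 _
      have h3 := (Fin.consEquiv (fun _ => ℕ)).symm.summable_iff.mpr h2
      simpa [Function.comp_def, Fin.prod_univ_succ, Fin.consEquiv, Fin.tail] using h3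


variable {n : ℕ} {M : Matrix (Fin n) (Fin n) ℝ} {lam1 : ℝ}

lemma eig_mem (hM : M.IsHermitian) (i : Fin n) :
    hM.eigenvalues i ∈ {μ : ℝ | ∃ v : Fin n → ℝ, v ≠ 0 ∧ M *ᵥ v = μ • v} :=
  ⟨hM.eigenvectorBasis i, fun h => hM.eigenvectorBasis.orthonormal.ne_zero i (by simpa using h),
    hM.mulVec_eigenvectorBasis i⟩

lemma inner_eq_dot' {n : ℕ} (y z : EuclideanSpace ℝ (Fin n)) :
    (inner ℝ y z : ℝ) = (y : Fin n → ℝ) ⬝ᵥ z := by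
  simp [PiLp.inner_apply, dotProduct, mul_comm]

lemma dot_self_expand (hM : M.IsHermitian) (x : Fin n → ℝ) :
    x ⬝ᵥ x = ∑ i, ((hM.eigenvectorBasis i : Fin n → ℝ) ⬝ᵥ x)^2 := by
  have h := hM.eigenvectorBasis.sum_inner_mul_inner (WithLp.toLp 2 x : EuclideanSpace ℝ (Fin n)) (WithLp.toLp 2 x)
  simp only [inner_eq_dot', WithLp.ofLp_toLp] at h
  rw [← h]; congr 1; ext i; rw [sq, dotProduct_comm (x : Fin n → ℝ)]

lemma dot_sym (hS : Mᵀ = M) (v w : Fin n → ℝ) :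
    v ⬝ᵥ (M *ᵥ w) = (M *ᵥ v) ⬝ᵥ w := by
  rw [dotProduct_mulVec, ← mulVec_transpose, hS, dotProduct_comm]

lemma dot_mulVec_expand (hM : M.IsHermitian) (x : Fin n → ℝ) :
    x ⬝ᵥ (M *ᵥ x) = ∑ i, hM.eigenvalues i * ((hM.eigenvectorBasis i : Fin n → ℝ) ⬝ᵥ x)^2 := by
  have hS : Mᵀ = M := by rw [← conjTranspose_eq_transpose_of_trivial]; exact hM
  have h := hM.eigenvectorBasis.sum_inner_mul_inner (WithLp.toLp 2 x : EuclideanSpace ℝ (Fin n))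
    (WithLp.toLp 2 (M *ᵥ x : Fin n → ℝ) : EuclideanSpace ℝ (Fin n))
  simp only [inner_eq_dot', WithLp.ofLp_toLp] at h
  rw [← h]; congr 1; ext i
  have heq : M *ᵥ (hM.eigenvectorBasis i : Fin n → ℝ)
      = hM.eigenvalues i • (hM.eigenvectorBasis i : Fin n → ℝ) := hM.mulVec_eigenvectorBasis i
  rw [dot_sym hS, heq, smul_dotProduct]
  · rw [sq, dotProduct_comm (x : Fin n → ℝ), smul_eq_mul]; ring

lemma rayleigh (hM : M.IsHermitian)
    (hlam : IsGreatest {μ : ℝ | ∃ v : Fin n → ℝ, v ≠ 0 ∧ M *ᵥ v = μ • v} lam1)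
    (x : Fin n → ℝ) : x ⬝ᵥ (M *ᵥ x) ≤ lam1 * (x ⬝ᵥ x) := by
  rw [dot_mulVec_expand hM, dot_self_expand hM, Finset.mul_sum]
  exact Finset.sum_le_sum fun i _ =>
    mul_le_mul_of_nonneg_right (hlam.2 (eig_mem hM i)) (sq_nonneg _)

lemma eig_of_rayleigh_eq (hM : M.IsHermitian)
    (hlam : IsGreatest {μ : ℝ | ∃ v : Fin n → ℝ, v ≠ 0 ∧ M *ᵥ v = μ • v} lam1)
    (x : Fin n → ℝ) (hx : lam1 * (x ⬝ᵥ x) ≤ x ⬝ᵥ (M *ᵥ x)) : M *ᵥ x = lam1 • x := by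
  set b := hM.eigenvectorBasis with hb
  set c : Fin n → ℝ := fun i => (b i : Fin n → ℝ) ⬝ᵥ x with hc
  have key : ∀ i : Fin n, hM.eigenvalues i * c i = lam1 * c i := by
    have h0 : ∑ i, (lam1 - hM.eigenvalues i) * (c i)^2 = 0 := by
      have h1 := dot_mulVec_expand hM x
      have h2 := dot_self_expand hM x
      have hle : ∑ i, (lam1 - hM.eigenvalues i) * (c i)^2 ≤ 0 := by
        have := hx
        rw [h1, h2, Finset.mul_sum] at this
        simpa [sub_mul, Finset.sum_sub_distrib] using sub_nonpos.mpr this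
      have hge : 0 ≤ ∑ i, (lam1 - hM.eigenvalues i) * (c i)^2 :=
        Finset.sum_nonneg fun i _ => mul_nonneg
          (sub_nonneg.mpr (hlam.2 (eig_mem hM i))) (sq_nonneg _)
      linarith
    intro i
    have := (Finset.sum_eq_zero_iff_of_nonneg (fun i _ => mul_nonneg
      (sub_nonneg.mpr (hlam.2 (eig_mem hM i))) (sq_nonneg _))).mp h0 i (Finset.mem_univ i)
    rcases mul_eq_zero.mp this with h | h
    · nlinarith [h]
    · have : c i = 0 := pow_eq_zero_iff (by norm_num) |>.mp h
      rw [this]; ring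
  have hxr : x = ∑ i, c i • (b i : Fin n → ℝ) := by
    have := congrArg WithLp.ofLp (b.sum_repr' (WithLp.toLp 2 x : EuclideanSpace ℝ (Fin n)))
    simp only [inner_eq_dot', WithLp.ofLp_toLp, WithLp.ofLp_sum, WithLp.ofLp_smul] at this
    exact this.symm
  calc M *ᵥ x = ∑ i, c i • (M *ᵥ (b i : Fin n → ℝ)) := by
        conv_lhs => rw [hxr, show (M *ᵥ ∑ i, c i • (b i : Fin n → ℝ))
          = M.mulVecLin (∑ i, c i • (b i : Fin n → ℝ)) from rfl]
        rw [map_sum]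
        simp [Matrix.mulVecLin_apply]
    _ = ∑ i, (lam1 * c i) • (b i : Fin n → ℝ) := by
        refine Finset.sum_congr rfl fun i _ => ?_
        have heq : M *ᵥ (b i : Fin n → ℝ)
          = hM.eigenvalues i • (b i : Fin n → ℝ) := hM.mulVec_eigenvectorBasis i
        rw [heq, smul_smul, mul_comm (c i), key i, mul_comm lam1]
    _ = lam1 • x := by
        rw [hxr, Finset.smul_sum]
        refine Finset.sum_congr rfl fun i _ => ?_
        rw [smul_smul]

lemma dot_mulVec_double {n : ℕ} (M : Matrix (Fin n) (Fin n) ℝ) (x y : Fin n → ℝ) :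
    x ⬝ᵥ (M *ᵥ y) = ∑ i, ∑ j, M i j * x i * y j := by
  simp only [dotProduct, mulVec]
  refine Finset.sum_congr rfl fun i _ => ?_
  rw [Finset.mul_sum]
  exact Finset.sum_congr rfl fun j _ => by ring

lemma perron {n : ℕ} {M : Matrix (Fin n) (Fin n) ℝ} {lam1 : ℝ} (hM : M.IsHermitian)
    (hnn : ∀ i j, 0 ≤ M i j)
    (hlam : IsGreatest {μ : ℝ | ∃ v : Fin n → ℝ, v ≠ 0 ∧ M *ᵥ v = μ • v} lam1) :
    ∃ w : Fin n → ℝ, w ≠ 0 ∧ (∀ i, 0 ≤ w i) ∧ M *ᵥ w = lam1 • w := by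
  obtain ⟨v, hv0, hv⟩ := hlam.1
  refine ⟨fun i => |v i|, ?_, fun i => abs_nonneg _, ?_⟩
  · intro h
    apply hv0; funext i
    have := congrFun h i
    simpa [abs_eq_zero] using this
  · apply eig_of_rayleigh_eq hM hlam
    have h1 : (fun i => |v i|) ⬝ᵥ (fun i => |v i|) = v ⬝ᵥ v := by
      simp only [dotProduct]
      exact Finset.sum_congr rfl fun i _ => abs_mul_abs_self _
    have h2 : v ⬝ᵥ (M *ᵥ v) = lam1 * (v ⬝ᵥ v) := by
      rw [hv, dotProduct_smul, smul_eq_mul]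
    have h3 : v ⬝ᵥ (M *ᵥ v) ≤ (fun i => |v i|) ⬝ᵥ (M *ᵥ (fun i => |v i|)) := by
      rw [dot_mulVec_double, dot_mulVec_double]
      refine Finset.sum_le_sum fun i _ => Finset.sum_le_sum fun j _ => ?_
      calc M i j * v i * v j ≤ |M i j * v i * v j| := le_abs_self _
        _ = M i j * |v i| * |v j| := by rw [abs_mul, abs_mul, abs_of_nonneg (hnn i j)]
    rw [h1]; linarith

section
variable {n : ℕ} (G : SimpleGraph (Fin n)) [DecidableRel G.Adj]

lemma adj_herm : (G.adjMatrix ℝ).IsHermitian :=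
  ((Matrix.conjTranspose_eq_transpose_of_trivial _).trans (SimpleGraph.transpose_adjMatrix G))

lemma adj_nonneg' (i j : Fin n) : 0 ≤ G.adjMatrix ℝ i j := by
  by_cases h : G.Adj i j <;> simp [SimpleGraph.adjMatrix_apply, h]

lemma adj_le_one (i j : Fin n) : G.adjMatrix ℝ i j ≤ 1 := by
  by_cases h : G.Adj i j <;> simp [SimpleGraph.adjMatrix_apply, h]

lemma W_eq (α β : ℝ) (ξ : Fin n → ℕ) :
    W G α β ξ = α/2 * ((fun i => (ξ i:ℝ)) ⬝ᵥ (fun i => (ξ i:ℝ)) - ∑ i, (ξ i:ℝ))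
      + β/2 * ((fun i => (ξ i:ℝ)) ⬝ᵥ (G.adjMatrix ℝ *ᵥ (fun i => (ξ i:ℝ)))) := by
  rw [W, dot_mulVec_double]
  have h1 : ∑ i, (ξ i:ℝ) * ((ξ i:ℝ) - 1)
      = (fun i => (ξ i:ℝ)) ⬝ᵥ (fun i => (ξ i:ℝ)) - ∑ i, (ξ i:ℝ) := by
    simp only [dotProduct, ← Finset.sum_sub_distrib]
    exact Finset.sum_congr rfl fun i _ => by ring
  rw [h1]

lemma Ctilde_ge_term (α β : ℝ) (ξ : Fin n → ℕ) (i : Fin n) :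
    Real.exp (W G α β ξ + α * (ξ i : ℝ)) ≤ Ctilde G α β ξ := by
  refine le_trans ?_ (le_add_of_nonneg_right
    (Finset.sum_nonneg fun j _ => (Real.exp_pos _).le))
  exact Finset.single_le_sum (f := fun i => Real.exp (W G α β ξ + α * (ξ i : ℝ)))
    (fun j _ => (Real.exp_pos _).le) (Finset.mem_univ i)

lemma not_summable_of_infinite_ge {ι : Type*} {g : ι → ℝ} {ε : ℝ} (hε : 0 < ε)
    {T : Set ι} (hT : T.Infinite) (h : ∀ ξ ∈ T, ε ≤ g ξ) : ¬ Summable g := by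
  intro hs
  have h0 := hs.tendsto_cofinite_zero
  have hb : Metric.ball (0:ℝ) ε ∈ nhds 0 := Metric.ball_mem_nhds _ hε
  have hfin := h0 hb
  rw [Filter.mem_map, Filter.mem_cofinite] at hfin
  refine hT (hfin.subset fun ξ hξ => ?_)
  simp only [Set.mem_compl_iff, Set.mem_preimage, Metric.mem_ball, Real.dist_eq, sub_zero,
    not_lt]
  exact le_trans (h ξ hξ) (le_abs_self _)

lemma lam1_nonneg {lam1 : ℝ} (hn : 0 < n)
    (hlam : IsGreatest {μ : ℝ | ∃ v : Fin n → ℝ, v ≠ 0 ∧ (G.adjMatrix ℝ) *ᵥ v = μ • v} lam1) :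
    0 ≤ lam1 := by
  have i0 : Fin n := ⟨0, hn⟩
  have hr := rayleigh (adj_herm G) hlam (Pi.single i0 1)
  have h1 : (Pi.single i0 1 : Fin n → ℝ) ⬝ᵥ ((G.adjMatrix ℝ) *ᵥ Pi.single i0 1) = 0 := by
    rw [dot_mulVec_double]
    simp [Pi.single_apply]
  have h2 : (Pi.single i0 1 : Fin n → ℝ) ⬝ᵥ (Pi.single i0 1 : Fin n → ℝ) = 1 := by
    simp [dotProduct, Pi.single_apply]
  rw [h1, h2, mul_one] at hr
  exact hr

lemma not_summable_alpha (hn : 0 < n) (α β : ℝ) (hα : 0 ≤ α) :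
    ¬ Summable (fun ξ : Fin n → ℕ => Ctilde G α β ξ) := by
  set i0 : Fin n := ⟨0, hn⟩ with hi0
  set F : ℕ → (Fin n → ℕ) := fun m => fun j => if j = i0 then m else 0 with hF
  have hFinj : Function.Injective F := by
    intro a b h
    have := congrFun h i0
    simpa [hF] using this
  refine not_summable_of_infinite_ge one_pos (Set.infinite_range_of_injective hFinj) ?_
  rintro ξ ⟨m, rfl⟩
  have hW : W G α β (F m) = α/2 * ((m:ℝ)*((m:ℝ)-1)) := by
    rw [W]
    have hc : ∀ j, ((F m j : ℕ) : ℝ) = if j = i0 then (m:ℝ) else 0 := by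
      intro j; by_cases h : j = i0 <;> simp [hF, h]
    have e1 : ∑ i, ((F m i:ℕ):ℝ) * (((F m i:ℕ):ℝ) - 1) = (m:ℝ)*((m:ℝ)-1) := by
      rw [Finset.sum_eq_single i0]
      · rw [hc i0, if_pos rfl]
      · intro j _ hj; rw [hc j, if_neg hj]; ring
      · intro h; exact absurd (Finset.mem_univ i0) h
    have e2 : ∑ i, ∑ j, G.adjMatrix ℝ i j * ((F m i:ℕ):ℝ) * ((F m j:ℕ):ℝ) = 0 := by
      refine Finset.sum_eq_zero fun i _ => Finset.sum_eq_zero fun j _ => ?_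
      by_cases h1 : i = i0
      · by_cases h2 : j = i0
        · subst h1; subst h2; simp
        · rw [hc j, if_neg h2]; ring
      · rw [hc i, if_neg h1]; ring
    rw [e1, e2]; ring
  have hterm := Ctilde_ge_term G α β (F m) i0
  refine le_trans ?_ hterm
  rw [← Real.exp_zero]
  apply Real.exp_le_exp.mpr
  have hF0 : ((F m i0 : ℕ):ℝ) = (m:ℝ) := by simp [hF]
  rw [hW, hF0]
  have hm0 : (0:ℝ) ≤ (m:ℝ) := Nat.cast_nonneg m
  rcases Nat.eq_zero_or_pos m with h | h
  · subst h; simp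
  · have : (1:ℝ) ≤ (m:ℝ) := by exact_mod_cast h
    have h1 : 0 ≤ (m:ℝ)*((m:ℝ)-1) := mul_nonneg hm0 (by linarith)
    have h2 : 0 ≤ α * (m:ℝ) := mul_nonneg hα hm0
    nlinarith

lemma not_summable_gamma {lam1 : ℝ} (hn : 0 < n) (α β : ℝ)
    (hlam : IsGreatest {μ : ℝ | ∃ v : Fin n → ℝ, v ≠ 0 ∧ (G.adjMatrix ℝ) *ᵥ v = μ • v} lam1)
    (hα : α < 0) (hγ : 0 ≤ α + β * lam1) :
    ¬ Summable (fun ξ : Fin n → ℕ => Ctilde G α β ξ) := by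
  have hSym : (G.adjMatrix ℝ)ᵀ = G.adjMatrix ℝ := SimpleGraph.transpose_adjMatrix G
  have hlam0 : 0 ≤ lam1 := lam1_nonneg G hn hlam
  have hlam1 : 0 < lam1 := by
    rcases eq_or_lt_of_le hlam0 with h | h
    · exfalso; rw [← h, mul_zero, add_zero] at hγ; exact absurd hγ (not_le.mpr hα)
    · exact h
  -- n ≥ 2
  have hn2 : 2 ≤ n := by
    by_contra h
    push_neg at h
    interval_cases n
    obtain ⟨v, hv0, hv⟩ := hlam.1
    have hM0 : (G.adjMatrix ℝ) = 0 := by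
      ext i j
      have : i = j := Subsingleton.elim i j
      subst this; simp
    rw [hM0, Matrix.zero_mulVec] at hv
    rcases smul_eq_zero.mp hv.symm with h1 | h1
    · exact absurd h1 (ne_of_gt hlam1)
    · exact hv0 h1
  obtain ⟨w, hw0, hwnn, hweig⟩ := perron (adj_herm G) (adj_nonneg' G) hlam
  obtain ⟨i1, hi1⟩ : ∃ i, 0 < w i := by
    obtain ⟨i, hi⟩ := Function.ne_iff.mp hw0
    exact ⟨i, lt_of_le_of_ne (hwnn i) (Ne.symm hi)⟩
  set F : ℕ → (Fin n → ℕ) := fun m i => ⌈(m:ℝ) * w i⌉₊ with hF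
  set K : ℝ := |α| * (n:ℝ) + |β| * (n:ℝ)^2 with hK
  refine not_summable_of_infinite_ge (ε := Real.exp (-(K/2))) (T := Set.range F) (Real.exp_pos _) ?_ ?_
  · -- range infinite
    apply Set.Infinite.of_image (fun ξ : Fin n → ℕ => ξ i1)
    rw [← Set.range_comp]
    have hub : ∀ b : ℕ, ∃ m : ℕ, b < ((fun ξ : Fin n → ℕ => ξ i1) ∘ F) m := by
      intro b
      obtain ⟨m, hm⟩ := exists_nat_gt ((b:ℝ) / w i1)
      refine ⟨m, ?_⟩
      show b < ⌈(m:ℝ) * w i1⌉₊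
      rw [Nat.lt_ceil]
      exact (div_lt_iff₀ hi1).mp hm
    intro hfin
    obtain ⟨b, hb⟩ := hfin.bddAbove
    obtain ⟨m, hm⟩ := hub b
    exact absurd (hb (Set.mem_range_self m)) (not_le.mpr hm)
  · -- lower bound on Ctilde along F
    rintro ξ ⟨m, rfl⟩
    set x : Fin n → ℝ := fun i => ((F m i : ℕ) : ℝ) with hx
    set δ : Fin n → ℝ := fun i => x i - (m:ℝ) * w i with hδ
    have hδ0 : ∀ i, 0 ≤ δ i := by
      intro i
      have := Nat.le_ceil ((m:ℝ) * w i)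
      simp only [hδ, hx, hF]
      linarith [this]
    have hδ1 : ∀ i, δ i ≤ 1 := by
      intro i
      have := Nat.ceil_lt_add_one (mul_nonneg (Nat.cast_nonneg m) (hwnn i))
      simp only [hδ, hx, hF]
      linarith [this]
    have hxw : x = (m:ℝ) • w + δ := by
      funext i
      simp only [Pi.add_apply, Pi.smul_apply, smul_eq_mul, hδ]
      ring
    -- expansion identities
    have h1 : x ⬝ᵥ x = (m:ℝ)^2*(w ⬝ᵥ w) + 2*(m:ℝ)*(w ⬝ᵥ δ) + δ ⬝ᵥ δ := by
      rw [hxw]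
      simp only [add_dotProduct, dotProduct_add, smul_dotProduct, dotProduct_smul,
        smul_eq_mul, dotProduct_comm δ w]
      ring
    have hMx : (G.adjMatrix ℝ) *ᵥ x = ((m:ℝ)*lam1) • w + (G.adjMatrix ℝ) *ᵥ δ := by
      rw [hxw, mulVec_add, mulVec_smul, hweig, smul_smul]
    have hwMδ : w ⬝ᵥ ((G.adjMatrix ℝ) *ᵥ δ) = lam1 * (w ⬝ᵥ δ) := by
      rw [dot_sym hSym w δ, hweig, smul_dotProduct, smul_eq_mul]
    have h2 : x ⬝ᵥ ((G.adjMatrix ℝ) *ᵥ x)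
        = lam1*((m:ℝ)^2*(w ⬝ᵥ w) + 2*(m:ℝ)*(w ⬝ᵥ δ)) + δ ⬝ᵥ ((G.adjMatrix ℝ) *ᵥ δ) := by
      conv_lhs => rw [hMx, hxw]
      simp only [add_dotProduct, dotProduct_add, smul_dotProduct, dotProduct_smul,
        smul_eq_mul, dotProduct_comm δ w, hwMδ]
      ring
    -- bounds on the error terms
    have hδδ : δ ⬝ᵥ δ ≤ (n:ℝ) := by
      calc δ ⬝ᵥ δ ≤ ∑ _i : Fin n, (1:ℝ) :=
            Finset.sum_le_sum fun i _ => mul_le_one₀ (hδ1 i) (hδ0 i) (hδ1 i)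
        _ = (n:ℝ) := by simp
    have hδδ0 : 0 ≤ δ ⬝ᵥ δ := Finset.sum_nonneg fun i _ => mul_self_nonneg _
    have hδMδ0 : 0 ≤ δ ⬝ᵥ ((G.adjMatrix ℝ) *ᵥ δ) := by
      rw [dot_mulVec_double]
      exact Finset.sum_nonneg fun i _ => Finset.sum_nonneg fun j _ =>
        mul_nonneg (mul_nonneg (adj_nonneg' G i j) (hδ0 i)) (hδ0 j)
    have hδMδ : δ ⬝ᵥ ((G.adjMatrix ℝ) *ᵥ δ) ≤ (n:ℝ)^2 := by
      rw [dot_mulVec_double]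
      calc ∑ i, ∑ j, G.adjMatrix ℝ i j * δ i * δ j ≤ ∑ _i : Fin n, ∑ _j : Fin n, (1:ℝ) := by
            refine Finset.sum_le_sum fun i _ => Finset.sum_le_sum fun j _ => ?_
            exact mul_le_one₀ (mul_le_one₀ (adj_le_one G i j) (hδ0 i) (hδ1 i)) (hδ0 j) (hδ1 j)
        _ = (n:ℝ)^2 := by simp [sq]
    -- minimum coordinate
    have hne : (Finset.univ : Finset (Fin n)).Nonempty := ⟨⟨0, hn⟩, Finset.mem_univ _⟩
    obtain ⟨i0, _, hi0⟩ := Finset.exists_min_image Finset.univ (fun i => F m i) hne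
    obtain ⟨j0, hj0⟩ : ∃ j0 : Fin n, j0 ≠ i0 := by
      have : Nontrivial (Fin n) := Fin.nontrivial_iff_two_le.mpr hn2
      exact exists_ne i0
    have hSnat : 2 * F m i0 ≤ ∑ i, F m i := by
      have hpair : F m i0 + F m j0 ≤ ∑ i, F m i :=
        Finset.add_le_sum (f := fun i => F m i) (fun i _ => Nat.zero_le _)
          (Finset.mem_univ i0) (Finset.mem_univ j0) (Ne.symm hj0)
      have := hi0 j0 (Finset.mem_univ j0)
      omega
    have hS2 : 0 ≤ (∑ i, x i) - 2 * x i0 := by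
      have : ((2 * F m i0 : ℕ) : ℝ) ≤ ((∑ i, F m i : ℕ) : ℝ) := Nat.cast_le.mpr hSnat
      push_cast at this
      simp only [hx]
      linarith
    -- nonnegativity facts
    have hA0 : 0 ≤ (m:ℝ)^2*(w ⬝ᵥ w) + 2*(m:ℝ)*(w ⬝ᵥ δ) := by
      have hww : 0 ≤ w ⬝ᵥ w := Finset.sum_nonneg fun i _ => mul_self_nonneg _
      have hwδ : 0 ≤ w ⬝ᵥ δ := Finset.sum_nonneg fun i _ => mul_nonneg (hwnn i) (hδ0 i)
      have := sq_nonneg (m:ℝ)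
      positivity
    have hq1 : 0 ≤ (α + β * lam1) * ((m:ℝ)^2*(w ⬝ᵥ w) + 2*(m:ℝ)*(w ⬝ᵥ δ)) :=
      mul_nonneg hγ hA0
    have habs : |α| = -α := abs_of_neg hα
    have hq2 : -(|α| * (n:ℝ)) ≤ α * (δ ⬝ᵥ δ) := by
      have h' : α * (n:ℝ) ≤ α * (δ ⬝ᵥ δ) := mul_le_mul_of_nonpos_left hδδ hα.le
      calc -(|α| * (n:ℝ)) = α * (n:ℝ) := by rw [habs]; ring
        _ ≤ α * (δ ⬝ᵥ δ) := h'
    have hq3 : -(|β| * (n:ℝ)^2) ≤ β * (δ ⬝ᵥ ((G.adjMatrix ℝ) *ᵥ δ)) := by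
      calc -(|β| * (n:ℝ)^2) ≤ -(|β| * (δ ⬝ᵥ ((G.adjMatrix ℝ) *ᵥ δ))) := by
            have := mul_le_mul_of_nonneg_left hδMδ (abs_nonneg β)
            linarith
        _ = (-|β|) * (δ ⬝ᵥ ((G.adjMatrix ℝ) *ᵥ δ)) := by ring
        _ ≤ β * (δ ⬝ᵥ ((G.adjMatrix ℝ) *ᵥ δ)) :=
            mul_le_mul_of_nonneg_right (neg_abs_le β) hδMδ0
    have hq4 : 0 ≤ (-α) * ((∑ i, x i) - 2 * x i0) := mul_nonneg (by linarith) hS2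
    -- exponent bound
    have hE : -(K/2) ≤ W G α β (F m) + α * x i0 := by
      have hdot1 : ((fun i => ((F m i : ℕ):ℝ)) ⬝ᵥ fun i => ((F m i : ℕ):ℝ)) = x ⬝ᵥ x := rfl
      have hdot2 : ((fun i => ((F m i : ℕ):ℝ)) ⬝ᵥ ((G.adjMatrix ℝ) *ᵥ fun i => ((F m i : ℕ):ℝ)))
          = x ⬝ᵥ ((G.adjMatrix ℝ) *ᵥ x) := rfl
      have hsum1 : (∑ i, ((F m i : ℕ):ℝ)) = ∑ i, x i := rfl
      rw [W_eq, hdot1, hdot2, hsum1, h1, h2, hK]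
      nlinarith [hq1, hq2, hq3, hq4]
    calc Real.exp (-(K/2)) ≤ Real.exp (W G α β (F m) + α * x i0) := Real.exp_le_exp.mpr hE
      _ ≤ Ctilde G α β (F m) := Ctilde_ge_term G α β (F m) i0

lemma Ctilde_nonneg {n : ℕ} (G : SimpleGraph (Fin n)) [DecidableRel G.Adj]
    (α β : ℝ) (ξ : Fin n → ℕ) : 0 ≤ Ctilde G α β ξ :=
  add_nonneg (Finset.sum_nonneg fun i _ => (Real.exp_pos _).le)
    (Finset.sum_nonneg fun i _ => (Real.exp_pos _).le)

lemma summable_side {lam1 : ℝ} (hn : 0 < n) (α β : ℝ)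
    (hlam : IsGreatest {μ : ℝ | ∃ v : Fin n → ℝ, v ≠ 0 ∧ (G.adjMatrix ℝ) *ᵥ v = μ • v} lam1)
    (hα : α < 0) (hαβ : α + β * lam1 < 0) :
    Summable (fun ξ : Fin n → ℕ => Ctilde G α β ξ) := by
  set M := G.adjMatrix ℝ with hMdef
  set c := max α (α + β*lam1) with hcdef
  have hc : c < 0 := max_lt hα hαβ
  set C := |α|/2 + |β| with hCdef
  set f : ℕ → ℝ := fun k => Real.exp (c/2*(k:ℝ)^2 + C*k) with hfdef
  have hfs : Summable f := summable_exp_quad hc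
  have hf0 : ∀ k, 0 ≤ f k := fun k => (Real.exp_pos _).le
  have hpi := summable_pi_prod n f hfs hf0
  refine Summable.of_nonneg_of_le (fun ξ => Ctilde_nonneg G α β ξ) ?_ (hpi.mul_left (2*(n:ℝ)))
  intro ξ
  set x : Fin n → ℝ := fun i => (ξ i:ℝ) with hxdef
  set S := ∑ i, x i with hSdef
  have hx0 : ∀ i, 0 ≤ x i := fun i => Nat.cast_nonneg _
  have hS0 : 0 ≤ S := Finset.sum_nonneg fun i _ => hx0 i
  have hxx0 : 0 ≤ x ⬝ᵥ x := Finset.sum_nonneg fun i _ => mul_self_nonneg _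
  -- quadratic form bound
  have hq : α*(x ⬝ᵥ x) + β*(x ⬝ᵥ (M *ᵥ x)) ≤ c*(x ⬝ᵥ x) := by
    rcases le_or_gt 0 β with hb | hb
    · have hr := rayleigh (adj_herm G) hlam x
      have h2 : β*(x ⬝ᵥ (M *ᵥ x)) ≤ β*(lam1*(x ⬝ᵥ x)) := mul_le_mul_of_nonneg_left hr hb
      have h3 : (α + β*lam1) * (x ⬝ᵥ x) ≤ c * (x ⬝ᵥ x) :=
        mul_le_mul_of_nonneg_right (le_max_right _ _) hxx0
      nlinarith
    · have hMx0 : 0 ≤ x ⬝ᵥ (M *ᵥ x) := by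
        rw [dot_mulVec_double]
        refine Finset.sum_nonneg fun i _ => Finset.sum_nonneg fun j _ => ?_
        exact mul_nonneg (mul_nonneg (adj_nonneg' G i j) (hx0 i)) (hx0 j)
      have h3 : α * (x ⬝ᵥ x) ≤ c * (x ⬝ᵥ x) :=
        mul_le_mul_of_nonneg_right (le_max_left _ _) hxx0
      nlinarith
  -- exponent bound
  have hB : ∑ i, (c/2*(x i)^2 + C*(x i)) = c/2*(x ⬝ᵥ x) + C*S := by
    rw [Finset.sum_add_distrib, ← Finset.mul_sum, ← Finset.mul_sum, hSdef]
    congr 2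
    simp [dotProduct, sq]
  have habs : |α| = -α := abs_of_neg hα
  have hexp : W G α β ξ + |β| * S ≤ ∑ i, (c/2*(x i)^2 + C*(x i)) := by
    have hdot1 : ((fun i => (ξ i:ℝ)) ⬝ᵥ fun i => (ξ i:ℝ)) = x ⬝ᵥ x := rfl
    have hdot2 : ((fun i => (ξ i:ℝ)) ⬝ᵥ ((G.adjMatrix ℝ) *ᵥ fun i => (ξ i:ℝ)))
        = x ⬝ᵥ (M *ᵥ x) := rfl
    have hsum1 : (∑ i, ((ξ i:ℝ))) = S := rfl
    rw [hB, W_eq, hdot1, hdot2, hsum1, hCdef, habs]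
    linarith
  -- per-term bounds
  have hterm1 : ∀ i, Real.exp (W G α β ξ + α * x i) ≤ Real.exp (∑ i, (c/2*(x i)^2 + C*(x i))) := by
    intro i
    apply Real.exp_le_exp.mpr
    have h1 : α * x i ≤ 0 := mul_nonpos_of_nonpos_of_nonneg hα.le (hx0 i)
    have h2 : 0 ≤ |β| * S := mul_nonneg (abs_nonneg _) hS0
    linarith
  have hterm2 : ∀ i, Real.exp (W G α β ξ - β * (M *ᵥ x) i)
      ≤ Real.exp (∑ i, (c/2*(x i)^2 + C*(x i))) := by
    intro i
    apply Real.exp_le_exp.mpr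
    have hMvi : (M *ᵥ x) i = ∑ j, M i j * x j := rfl
    have hMx : 0 ≤ (M *ᵥ x) i ∧ (M *ᵥ x) i ≤ S := by
      constructor
      · rw [hMvi]
        exact Finset.sum_nonneg fun j _ => mul_nonneg (adj_nonneg' G i j) (hx0 j)
      · rw [hMvi, hSdef]
        refine Finset.sum_le_sum fun j _ => ?_
        calc M i j * x j ≤ 1 * x j := mul_le_mul_of_nonneg_right (adj_le_one G i j) (hx0 j)
          _ = x j := one_mul _
    have : -β * (M *ᵥ x) i ≤ |β| * S := by
      calc -β * (M *ᵥ x) i ≤ |β| * (M *ᵥ x) i :=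
            mul_le_mul_of_nonneg_right (neg_le_abs β) hMx.1
        _ ≤ |β| * S := mul_le_mul_of_nonneg_left hMx.2 (abs_nonneg _)
    linarith
  -- assemble
  have hprod : Real.exp (∑ i, (c/2*(x i)^2 + C*(x i))) = ∏ i, f (ξ i) := by
    rw [Real.exp_sum]
  have hcard : (Finset.univ : Finset (Fin n)).card = n := by simp
  calc Ctilde G α β ξ
      ≤ (∑ _i : Fin n, Real.exp (∑ i, (c/2*(x i)^2 + C*(x i))))
        + ∑ _i : Fin n, Real.exp (∑ i, (c/2*(x i)^2 + C*(x i))) := by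
        refine add_le_add (Finset.sum_le_sum fun i _ => hterm1 i) ?_
        refine le_trans (Finset.sum_le_sum fun i _ => hterm2 i) ?_
        exact Finset.sum_le_sum_of_subset_of_nonneg (Finset.filter_subset _ _)
          (fun i _ _ => (Real.exp_pos _).le)
    _ = 2*(n:ℝ) * ∏ i, f (ξ i) := by
        rw [Finset.sum_const, hcard, hprod, nsmul_eq_mul]; ring

end

/-- `Σ_{ξ ∈ ℤ₊ⁿ} C̃_ξ < ∞` iff `α < 0` and `α + β λ₁(G) < 0`. -/
theorem stmt4 {n : ℕ} (hn : 0 < n) (G : SimpleGraph (Fin n)) [DecidableRel G.Adj]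
    (α β : ℝ) (lam1 : ℝ)
    (hlam : IsGreatest
      {μ : ℝ | ∃ v : Fin n → ℝ, v ≠ 0 ∧ (G.adjMatrix ℝ).mulVec v = μ • v} lam1) :
    Summable (fun ξ : Fin n → ℕ => Ctilde G α β ξ) ↔ α < 0 ∧ α + β * lam1 < 0 := by
  constructor
  · intro hs
    have hα : α < 0 := by
      by_contra h
      exact not_summable_alpha G hn α β (not_lt.mp h) hs
    refine ⟨hα, ?_⟩
    by_contra h
    exact not_summable_gamma G hn α β hlam hα (not_lt.mp h) hs
  · rintro ⟨hα, hαβ⟩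
    exact summable_side G hn α β hlam hα hαβ
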